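/- For all integers m and e, the tetrahedral index satisfies u^{e} · I_Δ(m-1, e) + u^{-m} · I_Δ(m, e-1) - I_Δ(m,e) = 0, where u plays the role of q^{1/2} (so u^{e} = q^{e/2} and u^{-m} = q^{-m/2}). -/

import Mathlib

open scoped BigOperators

/-- Finite q-Pochhammer symbol `(a;q)_n = ∏_{i=0}^{n-1} (1 - a q^i)`. -/
noncomputable def qPoch (a q : ℂ) (n : ℕ) : ℂ :=
  ∏ i ∈ Finset.range n, (1 - a * q ^ i)

/-- Infinite q-Pochhammer symbol `(a;q)_∞ = ∏_{i=0}^{∞} (1 - a q^i)`. -/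
noncomputable def qPochInf (a q : ℂ) : ℂ :=
  ∏' i : ℕ, (1 - a * q ^ i)

/-- The `n`-th term of the series defining the tetrahedral index `I_Δ(m,e)`,
with `q = u^2` and vanishing below `e₊ = max(-e,0)`. -/
noncomputable def tetTerm (u : ℂ) (m e : ℤ) (n : ℕ) : ℂ :=
  if (-e).toNat ≤ n then
    (-1 : ℂ) ^ n * u ^ ((n : ℤ) * ((n : ℤ) + 1) - (2 * (n : ℤ) + e) * m) /
      (qPoch (u ^ 2) (u ^ 2) n * qPoch (u ^ 2) (u ^ 2) ((n : ℤ) + e).toNat)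
  else 0

/-- The tetrahedral index `I_Δ(m,e) = Σ_{n=e₊}^∞ (-1)^n u^{n(n+1)-(2n+e)m}/((q;q)_n (q;q)_{n+e})`. -/
noncomputable def tetIndex (u : ℂ) (m e : ℤ) : ℂ := ∑' n : ℕ, tetTerm u m e n

/- ### Auxiliary lemmas -/

lemma prod_one_sub_ge (t : Finset ℕ) (f : ℕ → ℝ) (h0 : ∀ i, 0 ≤ f i) (h1 : ∀ i, f i ≤ 1) :
    1 - ∑ i ∈ t, f i ≤ ∏ i ∈ t, (1 - f i) := by
  induction t using Finset.induction with
  | empty => simp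
  | @insert a t ha ih =>
      rw [Finset.prod_insert ha, Finset.sum_insert ha]
      have hs : 0 ≤ ∑ i ∈ t, f i := Finset.sum_nonneg fun i _ => h0 i
      nlinarith [h0 a, h1 a, ih]

lemma real_prod_lb {s : ℝ} (hs0 : 0 ≤ s) (hs1 : s < 1) :
    ∃ c > 0, ∀ n, c ≤ ∏ i ∈ Finset.range n, (1 - s ^ (i + 1)) := by
  obtain ⟨N, hN⟩ : ∃ N : ℕ, s ^ (N + 1) ≤ (1 - s) / 2 := by
    obtain ⟨N, hN⟩ := exists_pow_lt_of_lt_one (by linarith : (0:ℝ) < (1 - s) / 2) hs1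
    exact ⟨N, by rw [pow_succ]; nlinarith [pow_nonneg hs0 N]⟩
  have hfac : ∀ i : ℕ, 0 < 1 - s ^ (i + 1) := fun i => by
    have := pow_lt_one₀ hs0 hs1 (show i + 1 ≠ 0 by omega); linarith
  have hPN : 0 < ∏ i ∈ Finset.range N, (1 - s ^ (i + 1)) :=
    Finset.prod_pos fun i _ => hfac i
  refine ⟨(∏ i ∈ Finset.range N, (1 - s ^ (i + 1))) / 2, by positivity, fun n => ?_⟩
  have hPn : 0 < ∏ i ∈ Finset.range n, (1 - s ^ (i + 1)) :=
    Finset.prod_pos fun i _ => hfac i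
  rcases le_or_gt n N with h | h
  · have hsplit : (∏ i ∈ Finset.range n, (1 - s ^ (i + 1))) *
        ∏ i ∈ Finset.Ico n N, (1 - s ^ (i + 1)) = ∏ i ∈ Finset.range N, (1 - s ^ (i + 1)) :=
      Finset.prod_range_mul_prod_Ico _ h
    have h2 : ∏ i ∈ Finset.Ico n N, (1 - s ^ (i + 1)) ≤ 1 :=
      Finset.prod_le_one (fun i _ => (hfac i).le)
        (fun i _ => by nlinarith [pow_nonneg hs0 (i + 1)])
    nlinarith [mul_le_mul_of_nonneg_left h2 hPn.le]
  · have hsplit : (∏ i ∈ Finset.range N, (1 - s ^ (i + 1))) *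
        ∏ i ∈ Finset.Ico N n, (1 - s ^ (i + 1)) = ∏ i ∈ Finset.range n, (1 - s ^ (i + 1)) :=
      Finset.prod_range_mul_prod_Ico _ h.le
    have hsum : ∑ i ∈ Finset.Ico N n, s ^ (i + 1) ≤ 1 / 2 := by
      have he : ∑ i ∈ Finset.Ico N n, s ^ (i + 1)
          = s ^ (N + 1) * ∑ j ∈ Finset.range (n - N), s ^ j := by
        rw [Finset.sum_Ico_eq_sum_range, Finset.mul_sum]
        exact Finset.sum_congr rfl fun j _ => by rw [← pow_add]; ring_nf
      have hg : ∑ j ∈ Finset.range (n - N), s ^ j ≤ 1 / (1 - s) := by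
        rw [geom_sum_eq (by linarith : s ≠ 1)]
        have hrw : (s ^ (n - N) - 1) / (s - 1) = (1 - s ^ (n - N)) / (1 - s) := by
          rw [← neg_div_neg_eq]; ring_nf
        rw [hrw, div_le_div_iff₀ (by linarith) (by linarith)]
        nlinarith [pow_nonneg hs0 (n - N)]
      have hp : (0:ℝ) ≤ s ^ (N + 1) := pow_nonneg hs0 _
      calc ∑ i ∈ Finset.Ico N n, s ^ (i + 1)
          = s ^ (N + 1) * ∑ j ∈ Finset.range (n - N), s ^ j := he
        _ ≤ ((1 - s) / 2) * (1 / (1 - s)) := by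
            apply mul_le_mul hN hg (by positivity) (by linarith)
        _ = 1 / 2 := by
            rw [div_mul_div_comm, mul_one, div_eq_div_iff (by nlinarith) (by norm_num)]
            ring
    have htail : 1 - ∑ i ∈ Finset.Ico N n, s ^ (i + 1)
        ≤ ∏ i ∈ Finset.Ico N n, (1 - s ^ (i + 1)) :=
      prod_one_sub_ge _ _ (fun i => pow_nonneg hs0 _) (fun i => by linarith [hfac i])
    nlinarith [mul_le_mul_of_nonneg_left (le_trans (by linarith) htail) hPN.le]

lemma norm_qPoch_lb (u : ℂ) (hu1 : ‖u‖ < 1) :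
    ∃ c > 0, ∀ n, c ≤ ‖qPoch (u ^ 2) (u ^ 2) n‖ := by
  have hs0 : (0:ℝ) ≤ ‖u‖ ^ 2 := by positivity
  have hs1 : ‖u‖ ^ 2 < 1 := by nlinarith [norm_nonneg u]
  obtain ⟨c, hc, h⟩ := real_prod_lb hs0 hs1
  refine ⟨c, hc, fun n => (h n).trans ?_⟩
  rw [qPoch, norm_prod]
  apply Finset.prod_le_prod
    (fun i _ => by nlinarith [pow_lt_one₀ hs0 hs1 (show i + 1 ≠ 0 by omega)])
  intro i _
  have h1 : ‖u ^ 2 * (u ^ 2) ^ i‖ = (‖u‖ ^ 2) ^ (i + 1) := by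
    rw [norm_mul, norm_pow, norm_pow, norm_pow]; ring
  calc 1 - (‖u‖ ^ 2) ^ (i + 1) = 1 - ‖u ^ 2 * (u ^ 2) ^ i‖ := by rw [h1]
    _ ≤ ‖1 - u ^ 2 * (u ^ 2) ^ i‖ := by
        have := norm_sub_norm_le (1 : ℂ) (u ^ 2 * (u ^ 2) ^ i)
        simpa using this

lemma qPoch_factor_ne_zero (u : ℂ) (hu1 : ‖u‖ < 1) (i : ℕ) :
    (1 : ℂ) - u ^ 2 * (u ^ 2) ^ i ≠ 0 := by
  intro h
  have h3 : ‖u ^ 2 * (u ^ 2) ^ i‖ < 1 := by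
    have h2 : ‖u ^ 2 * (u ^ 2) ^ i‖ = ‖u‖ ^ (2 * (i + 1)) := by
      rw [norm_mul, norm_pow, norm_pow, norm_pow, ← pow_mul]; ring_nf
    rw [h2]; exact pow_lt_one₀ (norm_nonneg u) hu1 (by omega)
  rw [sub_eq_zero] at h
  rw [← h] at h3; simp at h3

lemma qPoch_ne_zero (u : ℂ) (hu1 : ‖u‖ < 1) (n : ℕ) : qPoch (u ^ 2) (u ^ 2) n ≠ 0 := by
  rw [qPoch, Finset.prod_ne_zero_iff]
  exact fun i _ => qPoch_factor_ne_zero u hu1 i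

lemma helper (v w A x y z P Q f g : ℂ) (hP : P ≠ 0) (hQ : Q ≠ 0) (hf : f ≠ 0)
    (hgf : g + f = 1) (h1 : v * x = z * g) (h2 : w * y = z) :
    v * (A * x / (P * (Q * f))) + w * (A * y / (P * Q)) = A * z / (P * (Q * f)) := by
  rw [show v * (A * x / (P * (Q * f))) = A * (v * x) / (P * (Q * f)) by ring, h1,
      show w * (A * y / (P * Q)) = A * (w * y) / (P * Q) by ring, h2]
  rw [div_add_div _ _ (by simp [hP, hQ, hf]) (by simp [hP, hQ])]
  rw [div_eq_div_iff (by simp [hP, hQ, hf]) (by simp [hP, hQ, hf])]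
  linear_combination (A * z * P ^ 2 * Q ^ 2 * f) * hgf

lemma helper0 (v A x z P : ℂ) (h : v * x = z) : v * (A * x / P) = A * z / P := by
  rw [← h]; ring

lemma tetTerm_rec (u : ℂ) (hu0 : 0 < ‖u‖) (hu1 : ‖u‖ < 1) (m e : ℤ) (n : ℕ) :
    u ^ e * tetTerm u (m - 1) e n + u ^ (-m) * tetTerm u m (e - 1) n = tetTerm u m e n := by
  have hu : u ≠ 0 := norm_pos_iff.mp hu0
  rcases lt_trichotomy ((n : ℤ) + e) 0 with h | h | h
  · have c1 : ¬ (-e).toNat ≤ n := by omega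
    have c2 : ¬ (-(e - 1)).toNat ≤ n := by omega
    rw [tetTerm, tetTerm, tetTerm, if_neg c1, if_neg c2, if_neg c1]
    simp
  · have c1 : (-e).toNat ≤ n := by omega
    have c2 : ¬ (-(e - 1)).toNat ≤ n := by omega
    have c3 : ((n : ℤ) + e).toNat = 0 := by omega
    rw [tetTerm, tetTerm, tetTerm, if_pos c1, if_neg c2, if_pos c1, c3, mul_zero, add_zero]
    exact helper0 _ _ _ _ _ (by
      rw [← zpow_add₀ hu]; congr 1; linear_combination (2:ℤ) * h)
  · have c1 : (-e).toNat ≤ n := by omega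
    have c2 : ¬ ¬ (-(e - 1)).toNat ≤ n := by omega
    rw [not_not] at c2
    set k : ℕ := ((n : ℤ) + e - 1).toNat with hk
    have hk1 : ((n : ℤ) + e).toNat = k + 1 := by omega
    have hk2 : ((n : ℤ) + (e - 1)).toNat = k := by omega
    rw [tetTerm, tetTerm, tetTerm, if_pos c1, if_pos c2, if_pos c1, hk1, hk2]
    rw [show qPoch (u^2) (u^2) (k+1) = qPoch (u^2) (u^2) k * (1 - u^2 * (u^2)^k) from
      Finset.prod_range_succ _ _]
    refine helper _ _ _ _ _ _ _ _ _ (u^2 * (u^2)^k) (qPoch_ne_zero u hu1 n)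
      (qPoch_ne_zero u hu1 k) (qPoch_factor_ne_zero u hu1 k) (by ring) ?_ ?_
    · have h2 : u ^ 2 * (u ^ 2) ^ k = u ^ (2 * (k:ℤ) + 2) := by
        rw [show (2 * (k:ℤ) + 2) = ((2 * k + 2 : ℕ) : ℤ) by push_cast; ring, zpow_natCast]
        ring
      rw [h2, ← zpow_add₀ hu, ← zpow_add₀ hu]
      congr 1
      have hnk : (n : ℤ) + e = (k : ℤ) + 1 := by omega
      linear_combination (2:ℤ) * hnk
    · rw [← zpow_add₀ hu]; congr 1; ring

lemma tetTerm_summable (u : ℂ) (hu0 : 0 < ‖u‖) (hu1 : ‖u‖ < 1) (m e : ℤ) :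
    Summable (tetTerm u m e) := by
  obtain ⟨c, hc, hlb⟩ := norm_qPoch_lb u hu1
  apply Summable.of_norm_bounded_eventually_nat (g := fun n => 1 / (c * c) * ‖u‖ ^ n)
    ((summable_geometric_of_lt_one (norm_nonneg u) hu1).mul_left _)
  rw [Filter.eventually_atTop]
  refine ⟨2 * m.natAbs + (e * m).natAbs + 1, fun n hn => ?_⟩
  by_cases hcond : (-e).toNat ≤ n
  · rw [tetTerm, if_pos hcond]
    have hEn : (n : ℤ) ≤ (n : ℤ) * ((n : ℤ) + 1) - (2 * (n : ℤ) + e) * m := by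
      have hA : ((e * m).natAbs : ℤ) + 1 ≤ (n : ℤ) - 2 * m := by omega
      have hB : (1 : ℤ) ≤ (n : ℤ) := by omega
      have hC : e * m ≤ ((e * m).natAbs : ℤ) := Int.le_natAbs
      nlinarith [mul_le_mul_of_nonneg_left hA (by omega : (0:ℤ) ≤ (n:ℤ)),
        mul_nonneg (by omega : (0:ℤ) ≤ (n:ℤ) - 1) (by positivity : (0:ℤ) ≤ ((e*m).natAbs : ℤ) + 1)]
    rw [norm_div, norm_mul, norm_mul, norm_pow, norm_neg, norm_one, one_pow, one_mul, norm_zpow]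
    have hb1 : ‖u‖ ^ ((n : ℤ) * ((n : ℤ) + 1) - (2 * (n : ℤ) + e) * m) ≤ ‖u‖ ^ n := by
      have := zpow_le_zpow_right_of_le_one₀ hu0 hu1.le hEn
      rwa [zpow_natCast] at this
    calc ‖u‖ ^ ((n : ℤ) * ((n : ℤ) + 1) - (2 * (n : ℤ) + e) * m) /
          (‖qPoch (u^2) (u^2) n‖ * ‖qPoch (u^2) (u^2) ((n:ℤ)+e).toNat‖)
        ≤ ‖u‖ ^ n / (c * c) := by
          apply div_le_div₀ (by positivity) hb1 (by positivity)
          exact mul_le_mul (hlb n) (hlb _) hc.le (le_trans hc.le (hlb n))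
      _ = 1 / (c * c) * ‖u‖ ^ n := by ring
  · rw [tetTerm, if_neg hcond, norm_zero]; positivity

/-- `q^{e/2} I_Δ(m-1,e) + q^{-m/2} I_Δ(m,e-1) - I_Δ(m,e) = 0`, `u = q^{1/2}`. -/
theorem stmt_8 (u : ℂ) (hu0 : 0 < ‖u‖) (hu1 : ‖u‖ < 1) (m e : ℤ) :
    u ^ e * tetIndex u (m - 1) e + u ^ (-m) * tetIndex u m (e - 1) - tetIndex u m e = 0 := by
  have h1 := tetTerm_summable u hu0 hu1 (m - 1) e
  have h2 := tetTerm_summable u hu0 hu1 m (e - 1)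
  have key : u ^ e * tetIndex u (m - 1) e + u ^ (-m) * tetIndex u m (e - 1) = tetIndex u m e := by
    rw [tetIndex, tetIndex, tetIndex, ← tsum_mul_left, ← tsum_mul_left,
      ← Summable.tsum_add (h1.mul_left _) (h2.mul_left _)]
    exact tsum_congr fun n => tetTerm_rec u hu0 hu1 m e n
  rw [key, sub_self]
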